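/- There exists a constant c > 0 such that for every s ∈ (0,1], ∑_{m ∈ ℤ³, m ≠ 0} e^{−|m|² s} / |m|³ ≤ c (1 + log(1/s)). -/

import Mathlib

open Set

/-- Euclidean norm of a point of `ℤ³`. -/
noncomputable def znorm (m : ℤ × ℤ × ℤ) : ℝ :=
  Real.sqrt ((m.1 : ℝ) ^ 2 + (m.2.1 : ℝ) ^ 2 + (m.2.2 : ℝ) ^ 2)

namespace Stmt13Aux

/-- sup norm of a lattice point, as a natural number -/
def nm (m : ℤ × ℤ × ℤ) : ℕ := max m.1.natAbs (max m.2.1.natAbs m.2.2.natAbs)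

lemma znorm_nonneg (m : ℤ × ℤ × ℤ) : 0 ≤ znorm m := Real.sqrt_nonneg _

lemma nm_le_znorm (m : ℤ × ℤ × ℤ) : (nm m : ℝ) ≤ znorm m := by
  have hS : (0:ℝ) ≤ (m.1 : ℝ) ^ 2 + (m.2.1 : ℝ) ^ 2 + (m.2.2 : ℝ) ^ 2 := by positivity
  have key : ∀ x : ℤ, (x.natAbs:ℝ)^2 ≤ (m.1 : ℝ) ^ 2 + (m.2.1 : ℝ) ^ 2 + (m.2.2 : ℝ) ^ 2 →
      (x.natAbs : ℝ) ≤ znorm m := by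
    intro x hx
    exact Real.le_sqrt_of_sq_le hx
  have h1 : ((m.1.natAbs:ℝ))^2 = (m.1:ℝ)^2 := by
    rw [Nat.cast_natAbs]; push_cast; rw [sq_abs]
  have h2 : ((m.2.1.natAbs:ℝ))^2 = (m.2.1:ℝ)^2 := by
    rw [Nat.cast_natAbs]; push_cast; rw [sq_abs]
  have h3 : ((m.2.2.natAbs:ℝ))^2 = (m.2.2:ℝ)^2 := by
    rw [Nat.cast_natAbs]; push_cast; rw [sq_abs]
  have : (nm m : ℝ) = max (m.1.natAbs:ℝ) (max (m.2.1.natAbs:ℝ) (m.2.2.natAbs:ℝ)) := by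
    simp [nm, Nat.cast_max]
  rw [this]
  refine max_le (key _ (by nlinarith [sq_nonneg ((m.2.1:ℝ)), sq_nonneg ((m.2.2:ℝ))]))
    (max_le (key _ (by nlinarith [sq_nonneg ((m.1:ℝ)), sq_nonneg ((m.2.2:ℝ))]))
      (key _ (by nlinarith [sq_nonneg ((m.1:ℝ)), sq_nonneg ((m.2.1:ℝ))])))

lemma one_le_nm {m : ℤ × ℤ × ℤ} (h : m ≠ 0) : 1 ≤ nm m := by
  rw [Nat.one_le_iff_ne_zero]
  intro h0
  apply h
  have h1 : m.1.natAbs = 0 ∧ m.2.1.natAbs = 0 ∧ m.2.2.natAbs = 0 := by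
    simp only [nm, Nat.max_eq_zero_iff] at h0; tauto
  have : m.1 = 0 ∧ m.2.1 = 0 ∧ m.2.2 = 0 := by omega
  ext
  · exact this.1
  · exact this.2.1
  · exact this.2.2

/-- the box of sup-norm radius `k` -/
noncomputable def box (k : ℕ) : Finset (ℤ × ℤ × ℤ) :=
  Finset.Icc (-(k:ℤ), (-(k:ℤ), -(k:ℤ))) ((k:ℤ), ((k:ℤ), (k:ℤ)))

lemma mem_box {k : ℕ} {m : ℤ × ℤ × ℤ} : m ∈ box k ↔ nm m ≤ k := by
  simp only [box, Finset.mem_Icc, Prod.le_def, nm]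
  omega

lemma card_box (k : ℕ) : (box k).card = (2*k+1)^3 := by
  rw [box, Finset.card_Icc_prod, Finset.card_Icc_prod]
  simp only [Int.card_Icc]
  have : ((k:ℤ) + 1 - -(k:ℤ)).toNat = 2*k+1 := by omega
  rw [this]; ring

lemma card_fiber_le (T : Finset (ℤ × ℤ × ℤ)) (k : ℕ) (hk : 1 ≤ k) :
    (T.filter (fun m => nm m = k)).card ≤ 26 * k^2 := by
  have hsub : T.filter (fun m => nm m = k) ⊆ box k \ box (k-1) := by
    intro m hm
    rw [Finset.mem_filter] at hm
    rw [Finset.mem_sdiff, mem_box, mem_box]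
    omega
  have hsub2 : box (k-1) ⊆ box k := by
    intro m hm; rw [mem_box] at *; omega
  calc (T.filter (fun m => nm m = k)).card ≤ (box k \ box (k-1)).card :=
        Finset.card_le_card hsub
    _ = (box k).card - (box (k-1)).card := Finset.card_sdiff_of_subset hsub2
    _ ≤ 26 * k^2 := by
        rw [card_box, card_box]
        obtain ⟨j, rfl⟩ : ∃ j, k = j + 1 := ⟨k - 1, by omega⟩
        have h1 : 2*(j+1)+1 = 2*j+3 := by ring
        have h2 : (j+1) - 1 = j := by omega
        rw [h1, h2]
        have e1 : (2*j+3)^3 = (2*j+1)^3 + (24*j^2+48*j+26) := by ring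
        have e2 : 26*(j+1)^2 = 26*j^2 + 52*j + 26 := by ring
        rw [e1, e2]
        omega


lemma oneD (s : ℝ) (hs0 : 0 < s) (hs1 : s ≤ 1) (K : ℕ) :
    ∑ k ∈ Finset.Icc 1 K, Real.exp (-((k:ℝ)^2 * s)) / k ≤ 5 + Real.log (1/s) := by
  have hsq : 0 < Real.sqrt s := Real.sqrt_pos.2 hs0
  have hlog0 : 0 ≤ Real.log (1/s) := Real.log_nonneg (by rw [le_div_iff₀ hs0]; linarith)
  set N : ℕ := ⌈1 / Real.sqrt s⌉₊ with hNdef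
  have hN1 : 1 ≤ N := Nat.one_le_ceil_iff.2 (by positivity)
  have hN1R : (1:ℝ) ≤ N := by exact_mod_cast hN1
  have hNr : 1 / Real.sqrt s ≤ N := Nat.le_ceil _
  have hsqle : Real.sqrt s ≤ 1 := by
    rw [show (1:ℝ) = Real.sqrt 1 by simp]
    exact Real.sqrt_le_sqrt hs1
  have hA : 1 ≤ (N:ℝ)^2 * s := by
    have h1 : 1 ≤ (N:ℝ) * Real.sqrt s := by
      rw [div_le_iff₀ hsq] at hNr; linarith
    have h2 : 1 ≤ ((N:ℝ) * Real.sqrt s)^2 := by nlinarith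
    have h3 : ((N:ℝ) * Real.sqrt s)^2 = (N:ℝ)^2 * s := by
      rw [mul_pow, Real.sq_sqrt hs0.le]
    linarith [h3 ▸ h2]
  have hB2 : (N:ℝ) * s ≤ 2 := by
    have h1 : (N:ℝ) < 1/Real.sqrt s + 1 := Nat.ceil_lt_add_one (by positivity)
    have h2 : (N:ℝ) * s ≤ (1/Real.sqrt s + 1) * s := by nlinarith
    have h3 : (1/Real.sqrt s) * s = Real.sqrt s := by
      rw [one_div, inv_mul_eq_div, Real.div_sqrt]
    nlinarith
  have hB0 : 0 < (N:ℝ) * s := by positivity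
  have hterm : ∀ k : ℕ, 0 ≤ Real.exp (-((k:ℝ)^2 * s)) / k := fun k => by positivity
  set M := max K N with hM
  have hsub : Finset.Icc 1 K ⊆ Finset.Icc 1 M :=
    Finset.Icc_subset_Icc_right (le_max_left _ _)
  refine le_trans (Finset.sum_le_sum_of_subset_of_nonneg hsub (fun k _ _ => hterm k)) ?_
  have hIoc : ∀ n : ℕ, Finset.Icc 1 n = Finset.Ioc 0 n := by
    intro n; rw [← Finset.Icc_add_one_left_eq_Ioc]; rfl
  have hsplit : (∑ k ∈ Finset.Ioc 0 N, Real.exp (-((k:ℝ)^2 * s)) / k)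
      + ∑ k ∈ Finset.Ioc N M, Real.exp (-((k:ℝ)^2 * s)) / k
      = ∑ k ∈ Finset.Ioc 0 M, Real.exp (-((k:ℝ)^2 * s)) / k :=
    Finset.sum_Ioc_consecutive _ (Nat.zero_le N) (le_max_right K N)
  rw [hIoc, ← hsplit]
  -- head bound
  have head : (∑ k ∈ Finset.Ioc 0 N, Real.exp (-((k:ℝ)^2 * s)) / k) ≤ 1 + Real.log N := by
    have h1 : (∑ k ∈ Finset.Ioc 0 N, Real.exp (-((k:ℝ)^2 * s)) / k)
        ≤ ∑ k ∈ Finset.Ioc 0 N, ((k:ℝ))⁻¹ := by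
      refine Finset.sum_le_sum (fun k hk => ?_)
      rw [Finset.mem_Ioc] at hk
      have hk0 : (0:ℝ) < k := by exact_mod_cast hk.1
      rw [div_le_iff₀ hk0, inv_mul_cancel₀ hk0.ne']
      exact Real.exp_le_one_iff.2 (neg_nonpos.2 (by positivity))
    have h2 : (∑ k ∈ Finset.Ioc 0 N, ((k:ℝ))⁻¹) = (harmonic N : ℝ) := by
      rw [harmonic_eq_sum_Icc, ← hIoc]
      push_cast
      rfl
    calc (∑ k ∈ Finset.Ioc 0 N, Real.exp (-((k:ℝ)^2 * s)) / k)
        ≤ ∑ k ∈ Finset.Ioc 0 N, ((k:ℝ))⁻¹ := h1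
      _ = (harmonic N : ℝ) := h2
      _ ≤ 1 + Real.log N := harmonic_le_one_add_log N
  have hlogN : Real.log N ≤ 1 + Real.log (1/s) := by
    have h1 : (N:ℝ) < 1/Real.sqrt s + 1 := Nat.ceil_lt_add_one (by positivity)
    have h2 : 1/Real.sqrt s + 1 ≤ 2 / Real.sqrt s := by
      rw [div_add' _ _ _ hsq.ne', div_le_div_iff₀ hsq hsq]
      nlinarith
    have h3 : Real.log N ≤ Real.log (2 / Real.sqrt s) :=
      Real.log_le_log (by positivity) (by linarith)
    have h4 : Real.log (2 / Real.sqrt s) = Real.log 2 - Real.log s / 2 := by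
      rw [Real.log_div (by norm_num) hsq.ne', Real.log_sqrt hs0.le]
    have h5 : Real.log (1/s) = - Real.log s := by
      rw [one_div, Real.log_inv]
    have h6 : Real.log s ≤ 0 := Real.log_nonpos hs0.le hs1
    have h7 : Real.log 2 < 1 := by
      have := Real.log_two_lt_d9; linarith
    linarith
  -- tail bound
  have tail : (∑ k ∈ Finset.Ioc N M, Real.exp (-((k:ℝ)^2 * s)) / k) ≤ 3 := by
    set r := Real.exp (-((N:ℝ) * s)) with hr
    have hr0 : 0 ≤ r := Real.exp_nonneg _
    have hr1 : r < 1 := Real.exp_lt_one_iff.2 (by linarith)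
    have key : ∀ k ∈ Finset.Ioc N M,
        Real.exp (-((k:ℝ)^2 * s)) / k ≤ (Real.exp (-((N:ℝ)^2 * s)) / N) * r^(k-N) := by
      intro k hk
      rw [Finset.mem_Ioc] at hk
      have hkN : N < k := hk.1
      have hkNR : (N:ℝ) ≤ (k:ℝ) := by exact_mod_cast hkN.le
      have hk0 : (0:ℝ) < k := by
        have : 0 < k := lt_of_le_of_lt (Nat.zero_le N) hkN
        exact_mod_cast this
      have hrpow : r^(k-N) = Real.exp (-(((k:ℝ) - N) * ((N:ℝ) * s))) := by
        rw [hr, ← Real.exp_nat_mul]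
        congr 1
        have : ((k - N : ℕ) : ℝ) = (k:ℝ) - (N:ℝ) := by
          push_cast [Nat.cast_sub hkN.le]; ring
        rw [this]; ring
      have hexp : Real.exp (-((k:ℝ)^2 * s)) ≤ Real.exp (-((N:ℝ)^2 * s)) * r^(k-N) := by
        rw [hrpow, ← Real.exp_add]
        apply Real.exp_le_exp.2
        nlinarith [mul_le_mul_of_nonneg_right hkNR (mul_nonneg hk0.le hs0.le)]
      calc Real.exp (-((k:ℝ)^2 * s)) / k ≤ (Real.exp (-((N:ℝ)^2 * s)) * r^(k-N)) / N := by
            apply div_le_div₀ (by positivity) hexp (by linarith) hkNR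
        _ = (Real.exp (-((N:ℝ)^2 * s)) / N) * r^(k-N) := by ring
    have hgeom : (∑ k ∈ Finset.Ioc N M, r^(k-N)) ≤ (1 - r)⁻¹ := by
      have hinj : Set.InjOn (· - N) (Finset.Ioc N M : Set ℕ) := by
        intro a ha b hb hab
        simp only [Finset.coe_Ioc, Set.mem_Ioc] at ha hb
        simp only [] at hab
        omega
      rw [← Finset.sum_image (fun a ha b hb hab => hinj ha hb hab)]
      refine le_trans (Summable.sum_le_tsum _ (fun j _ => pow_nonneg hr0 j)
        (summable_geometric_of_lt_one hr0 hr1)) ?_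
      rw [tsum_geometric_of_lt_one hr0 hr1]
    have hsum : (∑ k ∈ Finset.Ioc N M, Real.exp (-((k:ℝ)^2 * s)) / k)
        ≤ (Real.exp (-((N:ℝ)^2 * s)) / N) * (1 - r)⁻¹ := by
      calc (∑ k ∈ Finset.Ioc N M, Real.exp (-((k:ℝ)^2 * s)) / k)
          ≤ ∑ k ∈ Finset.Ioc N M, (Real.exp (-((N:ℝ)^2 * s)) / N) * r^(k-N) :=
            Finset.sum_le_sum key
        _ = (Real.exp (-((N:ℝ)^2 * s)) / N) * ∑ k ∈ Finset.Ioc N M, r^(k-N) := by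
            rw [Finset.mul_sum]
        _ ≤ (Real.exp (-((N:ℝ)^2 * s)) / N) * (1 - r)⁻¹ := by
            apply mul_le_mul_of_nonneg_left hgeom (by positivity)
    refine le_trans hsum ?_
    -- numeric estimates
    have hexpA : Real.exp (-((N:ℝ)^2 * s)) ≤ ((N:ℝ)^2 * s)⁻¹ := by
      rw [Real.exp_neg]
      apply inv_anti₀ (by linarith)
      linarith [Real.add_one_le_exp ((N:ℝ)^2 * s)]
    have hrB : r ≤ (1 + (N:ℝ)*s)⁻¹ := by
      rw [hr, Real.exp_neg]
      apply inv_anti₀ (by linarith)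
      linarith [Real.add_one_le_exp ((N:ℝ)*s)]
    have h1r : (1 - r)⁻¹ ≤ (1 + (N:ℝ)*s) / ((N:ℝ)*s) := by
      have hBpos : 0 < 1 + (N:ℝ)*s := by linarith
      have heq : 1 - (1+(N:ℝ)*s)⁻¹ = (N:ℝ)*s/(1+(N:ℝ)*s) := by field_simp; ring
      have h2 : (N:ℝ)*s/(1+(N:ℝ)*s) ≤ 1 - r := by linarith [heq ▸ (by linarith [hrB] : (1:ℝ) - (1+(N:ℝ)*s)⁻¹ ≤ 1 - r)]
      have hpos2 : 0 < (N:ℝ)*s/(1+(N:ℝ)*s) := by positivity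
      calc (1-r)⁻¹ ≤ ((N:ℝ)*s/(1+(N:ℝ)*s))⁻¹ := inv_anti₀ hpos2 h2
        _ = (1+(N:ℝ)*s)/((N:ℝ)*s) := by rw [inv_div]
    have hstep : (Real.exp (-((N:ℝ)^2*s))/N) * (1-r)⁻¹
        ≤ (((N:ℝ)^2*s)⁻¹/(N:ℝ)) * ((1+(N:ℝ)*s)/((N:ℝ)*s)) := by
      have h1 : Real.exp (-((N:ℝ)^2*s))/N ≤ ((N:ℝ)^2*s)⁻¹/(N:ℝ) := by gcongr
      have hpos : 0 < 1 - r := by linarith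
      apply mul_le_mul h1 h1r (by positivity) (by positivity)
    refine le_trans hstep ?_
    have hinv : ((N:ℝ)^2*s)⁻¹ ≤ 1 := by
      rw [inv_le_one_iff₀]
      right; linarith
    rw [div_mul_div_comm, div_le_iff₀ (by positivity)]
    nlinarith [mul_le_mul_of_nonneg_right hinv (show (0:ℝ) ≤ 1 + (N:ℝ)*s by linarith)]
  linarith

lemma finsum_bound (s : ℝ) (hs0 : 0 < s) (hs1 : s ≤ 1) (T : Finset (ℤ × ℤ × ℤ))
    (hT : ∀ m ∈ T, m ≠ (0 : ℤ × ℤ × ℤ)) :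
    ∑ m ∈ T, Real.exp (-(znorm m ^ 2 * s)) / znorm m ^ 3 ≤ 130 * (1 + Real.log (1/s)) := by
  classical
  have hlog0 : 0 ≤ Real.log (1/s) := Real.log_nonneg (by rw [le_div_iff₀ hs0]; linarith)
  set K0 := (T.image nm).sup id with hK0
  have hsub : T.image nm ⊆ Finset.Icc 1 K0 := by
    intro k hk
    rw [Finset.mem_Icc]
    obtain ⟨m, hm, rfl⟩ := Finset.mem_image.1 hk
    exact ⟨one_le_nm (hT m hm), Finset.le_sup (f := id) hk⟩
  have step3 : ∀ k ∈ T.image nm, (T.filter (fun m => nm m = k)).card •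
      (Real.exp (-((k : ℝ)^2 * s)) / (k : ℝ)^3)
      ≤ 26 * (Real.exp (-((k:ℝ)^2*s))/(k:ℝ)) := by
    intro k hk
    obtain ⟨m, hm, hmk⟩ := Finset.mem_image.1 hk
    have hk1 : 1 ≤ k := hmk ▸ one_le_nm (hT m hm)
    have hk1R : (1:ℝ) ≤ (k:ℝ) := by exact_mod_cast hk1
    have hcard : ((T.filter (fun m => nm m = k)).card : ℝ) ≤ 26 * (k:ℝ)^2 := by
      exact_mod_cast Nat.cast_le.2 (card_fiber_le T k hk1)
    rw [nsmul_eq_mul]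
    have heq : 26 * (k:ℝ)^2 * (Real.exp (-((k:ℝ)^2*s)) / (k:ℝ)^3)
        = 26 * (Real.exp (-((k:ℝ)^2*s))/(k:ℝ)) := by
      field_simp
    rw [← heq]
    apply mul_le_mul_of_nonneg_right hcard (by positivity)
  calc ∑ m ∈ T, Real.exp (-(znorm m ^ 2 * s)) / znorm m ^ 3
      ≤ ∑ m ∈ T, Real.exp (-((nm m : ℝ)^2 * s)) / (nm m : ℝ)^3 := by
        refine Finset.sum_le_sum (fun m hm => ?_)
        have h1 : (1:ℝ) ≤ (nm m : ℝ) := by exact_mod_cast one_le_nm (hT m hm)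
        have h2 : (nm m : ℝ) ≤ znorm m := nm_le_znorm m
        apply div_le_div₀ (by positivity) ?_ (by positivity) ?_
        · apply Real.exp_le_exp.2
          have h3 : (nm m:ℝ)^2 ≤ znorm m ^2 := by nlinarith
          nlinarith
        · exact pow_le_pow_left₀ (by linarith) h2 3
    _ = ∑ k ∈ T.image nm, (T.filter (fun m => nm m = k)).card •
          (Real.exp (-((k : ℝ)^2 * s)) / (k : ℝ)^3) :=
        Finset.sum_comp (fun k : ℕ => Real.exp (-((k : ℝ)^2 * s)) / (k : ℝ)^3) nm
    _ ≤ ∑ k ∈ T.image nm, 26 * (Real.exp (-((k:ℝ)^2*s))/(k:ℝ)) :=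
        Finset.sum_le_sum step3
    _ ≤ ∑ k ∈ Finset.Icc 1 K0, 26 * (Real.exp (-((k:ℝ)^2*s))/(k:ℝ)) :=
        Finset.sum_le_sum_of_subset_of_nonneg hsub (fun k _ _ => by positivity)
    _ = 26 * ∑ k ∈ Finset.Icc 1 K0, Real.exp (-((k:ℝ)^2*s))/(k:ℝ) := by
        rw [Finset.mul_sum]
    _ ≤ 26 * (5 + Real.log (1/s)) := by
        have := oneD s hs0 hs1 K0
        linarith
    _ ≤ 130 * (1 + Real.log (1/s)) := by linarith

end Stmt13Aux

theorem stmt13 :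
    ∃ c > 0, ∀ s ∈ Set.Ioc (0:ℝ) 1,
      (∑' m : {m : ℤ × ℤ × ℤ // m ≠ 0},
          ENNReal.ofReal (Real.exp (-(znorm m ^ 2 * s)) / znorm m ^ 3)) ≤
        ENNReal.ofReal (c * (1 + Real.log (1 / s))) := by
  refine ⟨130, by norm_num, ?_⟩
  rintro s ⟨hs0, hs1⟩
  apply tsum_le_of_sum_le' zero_le
  intro S
  have hnn : ∀ x : {m : ℤ × ℤ × ℤ // m ≠ 0},
      0 ≤ Real.exp (-(znorm ↑x ^ 2 * s)) / znorm ↑x ^ 3 := fun x => by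
    have := Real.sqrt_nonneg ((x.1.1 : ℝ) ^ 2 + (x.1.2.1 : ℝ) ^ 2 + (x.1.2.2 : ℝ) ^ 2)
    positivity
  rw [← ENNReal.ofReal_sum_of_nonneg (fun i _ => hnn i)]
  apply ENNReal.ofReal_le_ofReal
  have heq : (∑ m ∈ S.image Subtype.val, Real.exp (-(znorm m ^ 2 * s)) / znorm m ^ 3)
      = ∑ x ∈ S, Real.exp (-(znorm ↑x ^ 2 * s)) / znorm ↑x ^ 3 :=
    Finset.sum_image (fun a _ b _ h => Subtype.val_injective h)
  rw [← heq]
  apply Stmt13Aux.finsum_bound s hs0 hs1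
  intro m hm
  obtain ⟨x, _, rfl⟩ := Finset.mem_image.1 hm
  exact x.2
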